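/- Let V be a real inner product space, let k ≥ 2, let m₁, …, m_k be integers with m_i ≥ 2 for all i, let c, λ be real numbers, and let η₁, …, η_k ∈ V be pairwise distinct vectors satisfying ⟨η_i, η_j⟩ = −c for all i ≠ j and (m_i − 1)(c + ‖η_i‖²) = λ for all i. Then λ > 0. -/
import Mathlib

open RealInnerProductSpace

/-- Final assertion of Lemma 4.2: if all `m i ≥ 2`, the principal normals are
pairwise distinct, `⟪η i, η j⟫ = -c` for `i ≠ j` and
`(m i - 1)(c + ‖η i‖²) = λ`, then `λ > 0`. -/
theorem ricci_pos_of_all_factors_ge_two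
    {V : Type*} [NormedAddCommGroup V] [InnerProductSpace ℝ V]
    (k : ℕ) (hk : 2 ≤ k) (m : Fin k → ℕ) (hm : ∀ i, 2 ≤ m i)
    (c lam : ℝ) (η : Fin k → V) (hdist : Function.Injective η)
    (hinner : ∀ i j, i ≠ j → ⟪η i, η j⟫ = -c)
    (heq : ∀ i, ((m i : ℝ) - 1) * (c + ‖η i‖ ^ 2) = lam) :
    0 < lam := by
  have h0 : (0 : ℕ) < k := by omega
  have h1 : (1 : ℕ) < k := by omega
  set i0 : Fin k := ⟨0, h0⟩
  set i1 : Fin k := ⟨1, h1⟩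
  have hne : i0 ≠ i1 := by simp [i0, i1, Fin.ext_iff]
  have hηne : η i0 ≠ η i1 := fun h => hne (hdist h)
  have hpos : 0 < ‖η i0 - η i1‖ ^ 2 := by
    exact pow_pos (norm_pos_iff.mpr (sub_ne_zero.mpr hηne)) 2
  have hexp : ‖η i0 - η i1‖ ^ 2
      = ‖η i0‖ ^ 2 - 2 * ⟪η i0, η i1⟫ + ‖η i1‖ ^ 2 := by
    exact norm_sub_sq_real _ _
  have hin := hinner i0 i1 hne
  have ha := heq i0
  have hb := heq i1
  have hm0 : (1 : ℝ) ≤ (m i0 : ℝ) - 1 := by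
    have := hm i0; have : (2 : ℝ) ≤ (m i0 : ℝ) := by exact_mod_cast this
    linarith
  have hm1 : (1 : ℝ) ≤ (m i1 : ℝ) - 1 := by
    have := hm i1; have : (2 : ℝ) ≤ (m i1 : ℝ) := by exact_mod_cast this
    linarith
  by_contra hle
  push_neg at hle
  have hA : c + ‖η i0‖ ^ 2 ≤ 0 := by nlinarith
  have hB : c + ‖η i1‖ ^ 2 ≤ 0 := by nlinarith
  nlinarith
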